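/- Let R be a finite valuation ring with odd residue characteristic and S = R[√j] a standard quadratic extension, where j ∈ R^× lifts a nonsquare of the residue field. Then the norm map N : S^× → R^×, N(a + b√j) = a² - j b², is surjective. -/

import Mathlib

/-- In a finite local ring whose residue field has `2 ≠ 0`, any unit whose residue
is a square has a square root which is a unit. -/
lemma sq_lift_aux (R : Type*) [CommRing R] [Fintype R] [IsLocalRing R]
    (h2 : (2 : IsLocalRing.ResidueField R) ≠ 0)
    {w : R} (hw : IsUnit w) (hsq : IsSquare (IsLocalRing.residue R w)) :
    ∃ t : R, IsUnit t ∧ t ^ 2 = w := by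
  set res := IsLocalRing.residue R with hres
  -- squaring is bijective on elements of residue 1
  have hinj : Function.Injective
      (fun x : {x : R // res x = 1} => (⟨x.1 ^ 2, by
        have : res (x.1 ^ 2) = (res x.1) ^ 2 := map_pow _ _ _
        rw [this, x.2, one_pow]⟩ : {x : R // res x = 1})) := by
    rintro ⟨x, hx⟩ ⟨y, hy⟩ h
    have hxy : x ^ 2 = y ^ 2 := congrArg Subtype.val h
    have hfac : (x - y) * (x + y) = 0 := by ring_nf; linear_combination hxy
    have hu : IsUnit (x + y) := by
      rw [← IsLocalRing.residue_ne_zero_iff_isUnit]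
      have : res (x + y) = 2 := by rw [map_add, hx, hy, one_add_one_eq_two]
      rw [← hres, this]; exact h2
    have : x - y = 0 := by
      rcases hu.exists_right_inv with ⟨z, hz⟩
      have := congrArg (· * z) hfac
      simp only [zero_mul, mul_assoc, hz, mul_one] at this
      exact this
    have : x = y := by linear_combination this
    exact Subtype.ext this
  have hsurj : Function.Surjective
      (fun x : {x : R // res x = 1} => (⟨x.1 ^ 2, by
        have : res (x.1 ^ 2) = (res x.1) ^ 2 := map_pow _ _ _
        rw [this, x.2, one_pow]⟩ : {x : R // res x = 1})) :=
    Finite.surjective_of_injective hinj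
  -- write residue of w as a nonzero square
  obtain ⟨c, hc⟩ := hsq
  have hwres : res w ≠ 0 := (IsLocalRing.residue_ne_zero_iff_isUnit w).2 hw
  have hc0 : c ≠ 0 := by
    intro h; apply hwres; rw [hc, h, mul_zero]
  obtain ⟨t0, ht0⟩ := IsLocalRing.residue_surjective (R := R) c
  have ht0u : IsUnit t0 := (IsLocalRing.residue_ne_zero_iff_isUnit t0).1 (by rw [ht0]; exact hc0)
  obtain ⟨s, hs⟩ := ht0u.exists_right_inv
  -- w * s^2 has residue 1
  have hu1 : res (w * s ^ 2) = 1 := by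
    have hres_s : res t0 * res s = 1 := by
      rw [← map_mul, hs, map_one]
    have : res (w * s ^ 2) = (c * c) * (res s) ^ 2 := by
      rw [map_mul, map_pow, hc]
    rw [this, ← ht0]
    ring_nf
    calc res t0 ^ 2 * res s ^ 2 = (res t0 * res s) ^ 2 := by ring
      _ = 1 := by rw [hres_s, one_pow]
  obtain ⟨⟨v, hv1⟩, hv⟩ := hsurj ⟨w * s ^ 2, hu1⟩
  have hv2 : v ^ 2 = w * s ^ 2 := congrArg Subtype.val hv
  refine ⟨v * t0, ?_, ?_⟩
  · have : res (v * t0) ≠ 0 := by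
      rw [map_mul, hv1, one_mul, ht0]; exact hc0
    exact (IsLocalRing.residue_ne_zero_iff_isUnit _).1 this
  · have hst : t0 * s = 1 := hs
    linear_combination t0 ^ 2 * hv2 + w * (t0 * s + 1) * hst

theorem norm_surjective_quadratic_extension
    (R : Type*) [CommRing R] [Fintype R] [IsLocalRing R] [IsPrincipalIdealRing R]
    (π : R) (hπ : IsLocalRing.maximalIdeal R = Ideal.span {π})
    (hqodd : Odd (Nat.card (IsLocalRing.ResidueField R)))
    (j : R) (hj : IsUnit j)
    (hnonsq : ¬ ∃ c : IsLocalRing.ResidueField R,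
      c ^ 2 = IsLocalRing.residue R j) :
    ∀ r : R, IsUnit r → ∃ a b : R, a ^ 2 - j * b ^ 2 = r := by
  set F := IsLocalRing.ResidueField R with hF
  set res := IsLocalRing.residue R with hres
  letI : Finite F := Finite.of_surjective (IsLocalRing.residue R) IsLocalRing.residue_surjective
  letI : Fintype F := Fintype.ofFinite F
  letI : DecidableEq F := Classical.decEq F
  have hcard : Fintype.card F % 2 = 1 := by
    have := hqodd
    rw [Nat.card_eq_fintype_card] at this
    exact Nat.odd_iff.1 this
  have hchar : ringChar F ≠ 2 := by
    intro h
    have := (FiniteField.even_card_iff_char_two (F := F)).1 h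
    omega
  have h2 : (2 : F) ≠ 0 := Ring.two_ne_zero hchar
  have hjres : res j ≠ 0 := (IsLocalRing.residue_ne_zero_iff_isUnit j).2 hj
  have hjnonsq : ¬ IsSquare (res j) := by
    rintro ⟨c, hc⟩
    exact hnonsq ⟨c, by rw [sq]; exact hc.symm⟩
  obtain ⟨jinv, hjinv⟩ := hj.exists_right_inv
  -- Step 1: represent j itself.  First solve x² - j̄ y² = j̄ in the residue field.
  obtain ⟨x, y, hxy⟩ := FiniteField.exists_root_sum_quadratic
    (f := Polynomial.X ^ 2 - Polynomial.C (res j))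
    (g := Polynomial.C (- res j) * Polynomial.X ^ 2)
    (Polynomial.degree_X_pow_sub_C (by norm_num) _)
    (Polynomial.degree_C_mul_X_pow 2 (neg_ne_zero.2 hjres)) hcard
  simp only [Polynomial.eval_sub, Polynomial.eval_pow, Polynomial.eval_X, Polynomial.eval_C,
    Polynomial.eval_mul, Polynomial.eval_neg] at hxy
  -- hxy : x ^ 2 - res j + -res j * y ^ 2 = 0
  obtain ⟨a0, ha0⟩ := IsLocalRing.residue_surjective (R := R) x
  obtain ⟨b0, hb0⟩ := IsLocalRing.residue_surjective (R := R) y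
  have hw : res ((a0 ^ 2 - j * b0 ^ 2) * jinv) = 1 := by
    have : res ((a0 ^ 2 - j * b0 ^ 2) * jinv)
        = (x ^ 2 - res j * y ^ 2) * res jinv := by
      simp [hres, map_mul, map_sub, map_pow, ha0, hb0]
    rw [this]
    have h1 : x ^ 2 - res j * y ^ 2 = res j := by linear_combination hxy
    have h2' : res j * res jinv = 1 := by rw [← map_mul, hjinv, map_one]
    rw [h1]; exact h2'
  have hwu : IsUnit ((a0 ^ 2 - j * b0 ^ 2) * jinv) :=
    (IsLocalRing.residue_ne_zero_iff_isUnit _).1 (by rw [hw]; exact one_ne_zero)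
  obtain ⟨t, htu, ht⟩ := sq_lift_aux R h2 hwu ⟨1, by rw [hw, mul_one]⟩
  -- ht : t ^ 2 = (a0 ^ 2 - j * b0 ^ 2) * jinv, so a0² - j b0² = j t².
  obtain ⟨t', htt'⟩ := htu.exists_right_inv
  -- j = (a0 t')² - j (b0 t')²
  have hjrep : (a0 * t') ^ 2 - j * (b0 * t') ^ 2 = j := by
    have key : a0 ^ 2 - j * b0 ^ 2 = j * t ^ 2 := by
      linear_combination (-j) * ht - (a0 ^ 2 - j * b0 ^ 2) * hjinv
    linear_combination t' ^ 2 * key + j * (t * t' + 1) * htt'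
  -- Step 2: the general unit r
  intro r hr
  have hrres : res r ≠ 0 := (IsLocalRing.residue_ne_zero_iff_isUnit r).2 hr
  by_cases hrs : IsSquare (res r)
  · obtain ⟨t1, _, ht1⟩ := sq_lift_aux R h2 hr hrs
    exact ⟨t1, 0, by rw [ht1]; ring⟩
  · -- res r and res j are both nonsquares, so res (r * j) is a square
    have hχr : quadraticChar F (res r) = -1 :=
      (quadraticChar_neg_one_iff_not_isSquare).2 hrs
    have hχj : quadraticChar F (res j) = -1 :=
      (quadraticChar_neg_one_iff_not_isSquare).2 hjnonsq
    have hrj_sq : IsSquare (res (r * j)) := by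
      by_contra hcon
      have : quadraticChar F (res (r * j)) = -1 :=
        (quadraticChar_neg_one_iff_not_isSquare).2 hcon
      rw [map_mul, map_mul, hχr, hχj] at this
      norm_num at this
    obtain ⟨t2, _, ht2⟩ := sq_lift_aux R h2 (hr.mul hj) hrj_sq
    -- ht2 : t2 ^ 2 = r * j ;  r = j * (t2 * jinv)^2
    refine ⟨a0 * t' * (t2 * jinv), b0 * t' * (t2 * jinv), ?_⟩
    have expand : (a0 * t' * (t2 * jinv)) ^ 2 - j * (b0 * t' * (t2 * jinv)) ^ 2
        = ((a0 * t') ^ 2 - j * (b0 * t') ^ 2) * (t2 * jinv) ^ 2 := by ring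
    rw [expand, hjrep]
    -- goal : j * (t2 * jinv)^2 = r, using t2² = r j and j * jinv = 1
    linear_combination jinv ^ 2 * j * ht2 + r * (j * jinv + 1) * hjinv
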